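/- Fix m ∈ ℝ and σ > 0. For each a > 0, let X_a be a random variable with the SVG distribution with parameters a, b = σ²/a and location m. Then as a → ∞, the laws of X_a converge weakly to the normal distribution N(m, σ²). -/

import Mathlib

open MeasureTheory ProbabilityTheory Filter
open scoped Topology

section Helpers

open Set
open scoped ENNReal

lemma integral_rpow_exp_Ioi {s : ℝ} (hs : 0 < s) :
    ∫ x in Set.Ioi (0:ℝ), x ^ (s - 1) * Real.exp (-x) = Real.Gamma s := by
  have h := Real.integral_rpow_mul_exp_neg_mul_Ioi hs one_pos
  simpa using h

lemma integrable_rpow_exp_Ioi {s : ℝ} (hs : 0 < s) :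
    IntegrableOn (fun x : ℝ => x ^ (s - 1) * Real.exp (-x)) (Set.Ioi 0) := by
  simpa [mul_comm] using Real.GammaIntegral_convergent hs

lemma gamma_central_integral {a : ℝ} (ha : 0 < a) :
    ∫ x in Set.Ioi (0:ℝ), (x ^ (a - 1) * Real.exp (-x)) * (x - a) ^ 2
      = a * Real.Gamma a := by
  have key : ∀ x ∈ Set.Ioi (0:ℝ),
      (x ^ (a - 1) * Real.exp (-x)) * (x - a) ^ 2
        = x ^ (a + 2 - 1) * Real.exp (-x)
          - 2 * a * (x ^ (a + 1 - 1) * Real.exp (-x))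
          + a ^ 2 * (x ^ (a - 1) * Real.exp (-x)) := by
    intro x hx
    have hx0 : (0:ℝ) < x := hx
    have e2 : x ^ (a + 2 - 1) = x ^ (a - 1) * x * x := by
      rw [show a + 2 - 1 = (a - 1) + 1 + 1 by ring, Real.rpow_add hx0,
        Real.rpow_add hx0, Real.rpow_one]
    have e1 : x ^ (a + 1 - 1) = x ^ (a - 1) * x := by
      rw [show a + 1 - 1 = (a - 1) + 1 by ring, Real.rpow_add hx0, Real.rpow_one]
    rw [e1, e2]; ring
  rw [setIntegral_congr_fun measurableSet_Ioi key]
  have i2 := integrable_rpow_exp_Ioi (s := a + 2) (by linarith)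
  have i1 := integrable_rpow_exp_Ioi (s := a + 1) (by linarith)
  have i0 := integrable_rpow_exp_Ioi (s := a) ha
  have iB : IntegrableOn
      (fun x : ℝ => 2 * a * (x ^ (a + 1 - 1) * Real.exp (-x))) (Set.Ioi 0) :=
    i1.const_mul _
  have iC : IntegrableOn
      (fun x : ℝ => a ^ 2 * (x ^ (a - 1) * Real.exp (-x))) (Set.Ioi 0) :=
    i0.const_mul _
  have iAB : IntegrableOn
      (fun x : ℝ => x ^ (a + 2 - 1) * Real.exp (-x)
        - 2 * a * (x ^ (a + 1 - 1) * Real.exp (-x))) (Set.Ioi 0) := i2.sub iB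
  rw [integral_add iAB iC, integral_sub i2 iB, integral_const_mul, integral_const_mul,
    integral_rpow_exp_Ioi (by linarith : (0:ℝ) < a + 2),
    integral_rpow_exp_Ioi (by linarith : (0:ℝ) < a + 1),
    integral_rpow_exp_Ioi ha]
  have g1 : Real.Gamma (a + 1) = a * Real.Gamma a := Real.Gamma_add_one ha.ne'
  have g2 : Real.Gamma (a + 2) = (a + 1) * Real.Gamma (a + 1) := by
    rw [show a + 2 = (a + 1) + 1 by ring]
    exact Real.Gamma_add_one (by linarith)
  rw [g2, g1]; ring

lemma key_expand {a : ℝ} : ∀ x ∈ Set.Ioi (0:ℝ),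
    (x ^ (a - 1) * Real.exp (-x)) * (x - a) ^ 2
      = x ^ (a + 2 - 1) * Real.exp (-x)
        - 2 * a * (x ^ (a + 1 - 1) * Real.exp (-x))
        + a ^ 2 * (x ^ (a - 1) * Real.exp (-x)) := by
  intro x hx
  have hx0 : (0:ℝ) < x := hx
  have e2 : x ^ (a + 2 - 1) = x ^ (a - 1) * x * x := by
    rw [show a + 2 - 1 = (a - 1) + 1 + 1 by ring, Real.rpow_add hx0,
      Real.rpow_add hx0, Real.rpow_one]
  have e1 : x ^ (a + 1 - 1) = x ^ (a - 1) * x := by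
    rw [show a + 1 - 1 = (a - 1) + 1 by ring, Real.rpow_add hx0, Real.rpow_one]
  rw [e1, e2]; ring

lemma integrable_central {a : ℝ} (ha : 0 < a) :
    IntegrableOn (fun x : ℝ => (x ^ (a - 1) * Real.exp (-x)) * (x - a) ^ 2)
      (Set.Ioi 0) := by
  have i2 := integrable_rpow_exp_Ioi (s := a + 2) (by linarith)
  have i1 := integrable_rpow_exp_Ioi (s := a + 1) (by linarith)
  have i0 := integrable_rpow_exp_Ioi (s := a) ha
  have iB : IntegrableOn
      (fun x : ℝ => 2 * a * (x ^ (a + 1 - 1) * Real.exp (-x))) (Set.Ioi 0) :=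
    i1.const_mul _
  have iC : IntegrableOn
      (fun x : ℝ => a ^ 2 * (x ^ (a - 1) * Real.exp (-x))) (Set.Ioi 0) :=
    i0.const_mul _
  have iSum : IntegrableOn
      (fun x : ℝ => x ^ (a + 2 - 1) * Real.exp (-x)
        - 2 * a * (x ^ (a + 1 - 1) * Real.exp (-x))
        + a ^ 2 * (x ^ (a - 1) * Real.exp (-x))) (Set.Ioi 0) := (i2.sub iB).add iC
  exact iSum.congr_fun (fun x hx => (key_expand x hx).symm) measurableSet_Ioi

lemma lintegral_gamma_central_sq {a : ℝ} (ha : 0 < a) :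
    ∫⁻ x, ENNReal.ofReal ((x - a) ^ 2) ∂(gammaMeasure a 1) = ENNReal.ofReal a := by
  have hΓ : 0 < Real.Gamma a := Real.Gamma_pos_of_pos ha
  have hpdf : Measurable (gammaPDF a 1) := (measurable_gammaPDFReal a 1).ennreal_ofReal
  rw [gammaMeasure, lintegral_withDensity_eq_lintegral_mul _ hpdf (by fun_prop)]
  simp only [Pi.mul_apply]
  rw [← lintegral_add_compl (μ := volume)
    (f := fun x => gammaPDF a 1 x * ENNReal.ofReal ((x - a) ^ 2)) measurableSet_Ioi]
  have h0 : ∫⁻ x in (Set.Ioi (0:ℝ))ᶜ, gammaPDF a 1 x * ENNReal.ofReal ((x - a) ^ 2)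
      ∂volume = 0 := by
    rw [compl_Ioi, setLIntegral_congr (α := ℝ) Iio_ae_eq_Iic.symm]
    rw [setLIntegral_congr_fun measurableSet_Iio
      (fun x (hx : x < 0) => by rw [gammaPDF_of_neg hx, zero_mul])]
    simp
  rw [h0, add_zero]
  have hcong : ∀ x ∈ Set.Ioi (0:ℝ),
      gammaPDF a 1 x * ENNReal.ofReal ((x - a) ^ 2)
        = ENNReal.ofReal ((x ^ (a - 1) * Real.exp (-x)) * (x - a) ^ 2 / Real.Gamma a) := by
    intro x hx
    have hx0 : (0:ℝ) < x := hx
    rw [gammaPDF_of_nonneg hx0.le, ← ENNReal.ofReal_mul (by positivity)]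
    congr 1
    rw [Real.one_rpow]
    field_simp
  rw [setLIntegral_congr_fun measurableSet_Ioi hcong]
  have hInt : IntegrableOn
      (fun x : ℝ => (x ^ (a - 1) * Real.exp (-x)) * (x - a) ^ 2 / Real.Gamma a)
      (Set.Ioi 0) := (integrable_central ha).div_const _
  have hNonneg : 0 ≤ᵐ[volume.restrict (Set.Ioi (0:ℝ))]
      fun x : ℝ => (x ^ (a - 1) * Real.exp (-x)) * (x - a) ^ 2 / Real.Gamma a := by
    refine (ae_restrict_iff' measurableSet_Ioi).mpr (ae_of_all _ fun x hx => ?_)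
    have hx0 : (0:ℝ) < x := hx
    have := Real.rpow_nonneg hx0.le (a - 1)
    positivity
  rw [← ofReal_integral_eq_lintegral_ofReal hInt hNonneg, integral_div,
    gamma_central_integral ha, mul_div_assoc, div_self hΓ.ne', mul_one]

lemma gamma_cheb {a δ : ℝ} (ha : 0 < a) (hδ : 0 < δ) :
    gammaMeasure a 1 {x : ℝ | a * δ ≤ |x - a|}
      ≤ ENNReal.ofReal (1 / (a * δ ^ 2)) := by
  have hmeas : Measurable fun x : ℝ => ENNReal.ofReal ((x - a) ^ 2) := by fun_prop
  have h := mul_meas_ge_le_lintegral (μ := gammaMeasure a 1) hmeas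
    (ENNReal.ofReal ((a * δ) ^ 2))
  rw [lintegral_gamma_central_sq ha] at h
  have hsub : {x : ℝ | a * δ ≤ |x - a|}
      ⊆ {x : ℝ | ENNReal.ofReal ((a * δ) ^ 2) ≤ ENNReal.ofReal ((x - a) ^ 2)} := by
    intro x hx
    simp only [Set.mem_setOf_eq] at *
    refine ENNReal.ofReal_le_ofReal ?_
    have h1 : (a * δ) ^ 2 ≤ |x - a| ^ 2 := by
      have : 0 ≤ a * δ := by positivity
      exact pow_le_pow_left₀ this hx 2
    calc (a * δ) ^ 2 ≤ |x - a| ^ 2 := h1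
      _ = (x - a) ^ 2 := sq_abs _
  have hne : ENNReal.ofReal ((a * δ) ^ 2) ≠ 0 := by
    simp only [ne_eq, ENNReal.ofReal_eq_zero, not_le]
    positivity
  calc gammaMeasure a 1 {x : ℝ | a * δ ≤ |x - a|}
      ≤ gammaMeasure a 1 {x : ℝ | ENNReal.ofReal ((a * δ) ^ 2)
          ≤ ENNReal.ofReal ((x - a) ^ 2)} := measure_mono hsub
    _ ≤ ENNReal.ofReal a / ENNReal.ofReal ((a * δ) ^ 2) := by
        rw [ENNReal.le_div_iff_mul_le (Or.inl hne) (Or.inl ENNReal.ofReal_ne_top),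
          mul_comm]
        exact h
    _ = ENNReal.ofReal (1 / (a * δ ^ 2)) := by
        rw [← ENNReal.ofReal_div_of_pos (by positivity)]
        congr 1
        field_simp

end Helpers

/-- The symmetric variance-gamma (SVG) distribution with shape `a`, scale `b` and
location `m`: the law of `m + √(b·G)·Z` where `G ~ Gamma(a,1)` and `Z ~ N(0,1)`
are independent. -/
noncomputable def svg (a b m : ℝ) : Measure ℝ :=
  ((gammaMeasure a 1).prod (gaussianReal 0 1)).map
    (fun p : ℝ × ℝ => m + Real.sqrt (b * p.1) * p.2)

/-- With `b = σ²/a`, the SVG distribution converges weakly to `N(m, σ²)` as `a → ∞`. -/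
theorem svg_tendsto_gaussian (m : ℝ) (σ : ℝ) (hσ : 0 < σ) :
    ∀ f : BoundedContinuousFunction ℝ ℝ,
      Tendsto (fun a : ℝ => ∫ x, f x ∂(svg a (σ ^ 2 / a) m)) atTop
        (𝓝 (∫ x, f x ∂(gaussianReal m ⟨σ ^ 2, sq_nonneg σ⟩))) := by
  intro f
  set F : ℝ → ℝ := fun t => ∫ z, f (m + t * z) ∂(gaussianReal 0 1) with hFdef
  have hFcont : Continuous F := by
    refine continuous_of_dominated (bound := fun _ => ‖f‖) (fun t => ?_) (fun t => ?_)
      (integrable_const _) ?_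
    · exact (f.continuous.comp (continuous_const.add
        (continuous_const.mul continuous_id))).aestronglyMeasurable
    · exact ae_of_all _ fun z => f.norm_coe_le_norm _
    · exact ae_of_all _ fun z => f.continuous.comp
        (continuous_const.add (continuous_id.mul continuous_const))
  have hFbound : ∀ t : ℝ, ‖F t‖ ≤ ‖f‖ := by
    intro t
    have := norm_integral_le_of_norm_le_const (μ := gaussianReal 0 1)
      (f := fun z => f (m + t * z)) (C := ‖f‖) (ae_of_all _ fun z => f.norm_coe_le_norm _)
    simpa using this
  set G : ℝ → ℝ := fun t => F (σ * Real.sqrt t) with hGdef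
  have hGcont : Continuous G := hFcont.comp (continuous_const.mul Real.continuous_sqrt)
  have hGbound : ∀ t : ℝ, ‖G t‖ ≤ ‖f‖ := fun t => hFbound _
  have hG1 : G 1 = F σ := by simp [hGdef]
  -- value of the limit
  have hval : ∫ x, f x ∂(gaussianReal m ⟨σ ^ 2, sq_nonneg σ⟩) = G 1 := by
    have h1 : ((gaussianReal 0 1).map (σ * ·)).map (m + ·)
        = gaussianReal m ⟨σ ^ 2, sq_nonneg σ⟩ := by
      rw [gaussianReal_map_const_mul, gaussianReal_map_const_add]
      congr 1
      · simp
      · ext; simp; rfl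
    have h2 : ((gaussianReal 0 1).map (σ * ·)).map (m + ·)
        = (gaussianReal 0 1).map (fun z => m + σ * z) := by
      rw [Measure.map_map (measurable_const_add m) (measurable_const_mul σ)]
      rfl
    rw [← h1, h2, integral_map (by fun_prop) f.continuous.aestronglyMeasurable, hG1]
  rw [hval]
  -- rewrite the prelimit expression, eventually in a
  have hEq : ∀ᶠ a in atTop, ∫ x, f x ∂(svg a (σ ^ 2 / a) m)
      = ∫ x, G (x / a) ∂(gammaMeasure a 1) := by
    filter_upwards [eventually_gt_atTop (0:ℝ)] with a ha
    have hprob_a : IsProbabilityMeasure (gammaMeasure a 1) :=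
      isProbabilityMeasure_gammaMeasure ha one_pos
    have hsq : ∀ x : ℝ, Real.sqrt (σ ^ 2 / a * x) = σ * Real.sqrt (x / a) := by
      intro x
      rw [show σ ^ 2 / a * x = σ ^ 2 * (x / a) by ring, Real.sqrt_mul (sq_nonneg σ),
        Real.sqrt_sq hσ.le]
    have hcont : Continuous (fun p : ℝ × ℝ => m + Real.sqrt (σ ^ 2 / a * p.1) * p.2) := by
      fun_prop
    have hint : Integrable (fun p : ℝ × ℝ => f (m + Real.sqrt (σ ^ 2 / a * p.1) * p.2))
        ((gammaMeasure a 1).prod (gaussianReal 0 1)) :=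
      (f.compContinuous ⟨_, hcont⟩).integrable _
    rw [svg, integral_map hcont.measurable.aemeasurable f.continuous.aestronglyMeasurable,
      MeasureTheory.integral_prod _ hint]
    refine integral_congr_ae (ae_of_all _ fun x => ?_)
    simp only [hsq, hGdef, hFdef]
  refine Tendsto.congr' (hEq.mono fun a h => h.symm) ?_
  -- main convergence
  rw [Metric.tendsto_atTop]
  intro ε hε
  obtain ⟨δ, hδ, hδε⟩ := Metric.continuousAt_iff.mp hGcont.continuousAt (ε / 2)
    (half_pos hε)
  refine ⟨max 1 (4 * (‖f‖ + 1) / (ε * δ ^ 2)), fun a haN => ?_⟩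
  have ha1 : (1:ℝ) ≤ a := le_trans (le_max_left _ _) haN
  have ha : (0:ℝ) < a := lt_of_lt_of_le one_pos ha1
  have haN2 : 4 * (‖f‖ + 1) / (ε * δ ^ 2) ≤ a := le_trans (le_max_right _ _) haN
  have hprob_a : IsProbabilityMeasure (gammaMeasure a 1) :=
    isProbabilityMeasure_gammaMeasure ha one_pos
  set S : Set ℝ := {x : ℝ | a * δ ≤ |x - a|} with hSdef
  have hSmeas : MeasurableSet S := by
    have : Continuous fun x : ℝ => |x - a| := by fun_prop
    exact measurableSet_le measurable_const this.measurable
  have hGaint : Integrable (fun x => G (x / a)) (gammaMeasure a 1) := by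
    refine Integrable.mono' (integrable_const ‖f‖)
      ((hGcont.comp (continuous_id.div_const a)).aestronglyMeasurable)
      (ae_of_all _ fun x => hGbound _)
  have hBint : Integrable (fun x => ε / 2 + S.indicator (fun _ => 2 * ‖f‖) x)
      (gammaMeasure a 1) :=
    (integrable_const _).add ((integrable_const _).indicator hSmeas)
  have hptwise : ∀ x : ℝ, |G (x / a) - G 1|
      ≤ ε / 2 + S.indicator (fun _ => 2 * ‖f‖) x := by
    intro x
    by_cases hx : x ∈ S
    · rw [Set.indicator_of_mem hx]
      have h1 : |G (x / a) - G 1| ≤ ‖G (x / a)‖ + ‖G 1‖ := by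
        rw [Real.norm_eq_abs, Real.norm_eq_abs]; exact abs_sub _ _
      have := hGbound (x / a); have := hGbound 1
      linarith [half_pos hε]
    · rw [Set.indicator_of_notMem hx, add_zero]
      have hd : dist (x / a) 1 < δ := by
        rw [Real.dist_eq]
        have hlt : |x - a| < a * δ := lt_of_not_ge hx
        rw [show x / a - 1 = (x - a) / a by field_simp, abs_div, abs_of_pos ha,
          div_lt_iff₀ ha]
        linarith [hlt]
      have := hδε hd
      rw [Real.dist_eq] at this
      linarith
  have hstep : dist (∫ x, G (x / a) ∂gammaMeasure a 1) (G 1)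
      ≤ ε / 2 + 2 * ‖f‖ * ((gammaMeasure a 1) S).toReal := by
    have hconst : ∫ _ : ℝ, G 1 ∂(gammaMeasure a 1) = G 1 := by simp
    rw [Real.dist_eq, ← hconst, ← integral_sub hGaint (integrable_const _)]
    calc |∫ x, (G (x / a) - G 1) ∂gammaMeasure a 1|
        ≤ ∫ x, |G (x / a) - G 1| ∂gammaMeasure a 1 := by
          simpa [Real.norm_eq_abs] using
            norm_integral_le_integral_norm (fun x => G (x / a) - G 1)
              (μ := gammaMeasure a 1)
      _ ≤ ∫ x, (ε / 2 + S.indicator (fun _ => 2 * ‖f‖) x) ∂gammaMeasure a 1 := by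
          refine integral_mono ((hGaint.sub (integrable_const _)).abs) hBint hptwise
      _ = ε / 2 + 2 * ‖f‖ * ((gammaMeasure a 1) S).toReal := by
          rw [integral_add (integrable_const _) ((integrable_const _).indicator hSmeas),
            integral_const, integral_indicator_const _ hSmeas]
          simp [mul_comm, measureReal_def]
  have hcheb : ((gammaMeasure a 1) S).toReal ≤ 1 / (a * δ ^ 2) :=
    ENNReal.toReal_le_of_le_ofReal (by positivity) (gamma_cheb ha hδ)
  have hfinal : 2 * ‖f‖ * ((gammaMeasure a 1) S).toReal < ε / 2 := by
    have hf0 : (0:ℝ) ≤ ‖f‖ := norm_nonneg f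
    have h2 : 2 * ‖f‖ * ((gammaMeasure a 1) S).toReal ≤ 2 * ‖f‖ * (1 / (a * δ ^ 2)) := by
      refine mul_le_mul_of_nonneg_left hcheb (by positivity)
    refine lt_of_le_of_lt h2 ?_
    rw [div_le_iff₀ (by positivity)] at haN2
    have hpos : 0 < a * δ ^ 2 := by positivity
    rw [mul_one_div, div_lt_iff₀ hpos]
    nlinarith [hδ, hε]
  calc dist (∫ x, G (x / a) ∂gammaMeasure a 1) (G 1)
      ≤ ε / 2 + 2 * ‖f‖ * ((gammaMeasure a 1) S).toReal := hstep
    _ < ε / 2 + ε / 2 := by linarith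
    _ = ε := by ring
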